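/- Let J₀ ∈ ℝ^{2×2} be the Jordan block [[λ, 1],[0, λ]] with λ ≠ 0, and b = (1, α)ᵀ with α ≠ 0. Then for every choice of real coefficients c₀,…,c_N, the functions η₁(β) = Σ_k c_k(βλ)^k + α Σ_k c_k k β^k λ^{k-1} and η₂(β) = α Σ_k c_k (βλ)^k (the components of Σ_k c_k β^k J₀^k b) satisfy the rigid relation η₁ = η₂/α + (d/dλ)η₂; in particular, the span of {β ↦ β^k J₀^k b : k ≥ 0} is not dense in C([β₁, β₂], ℝ²) for 0 < β₁ < β₂. -/

import Mathlib

/-- The reachable-set element for the Jordan block `J₀ = [[λ,1],[0,λ]]` with input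
column `b = (1, α)ᵀ`. -/
noncomputable def stmt9η (l α : ℝ) (N : ℕ) (c : ℕ → ℝ) (β : ℝ) : Fin 2 → ℝ :=
  ∑ k ∈ Finset.range N,
    c k • (β ^ k • ((!![l, 1; 0, l] : Matrix (Fin 2) (Fin 2) ℝ) ^ k).mulVec ![1, α])

lemma hkl (l : ℝ) (k : ℕ) : (k : ℝ) * l ^ (k - 1) * l = (k : ℝ) * l ^ k := by
  cases k with
  | zero => simp
  | succ m => push_cast; rw [mul_assoc, ← pow_succ]

lemma jpow (l : ℝ) (k : ℕ) :
    (!![l, 1; 0, l] : Matrix (Fin 2) (Fin 2) ℝ) ^ k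
      = !![l ^ k, (k : ℝ) * l ^ (k - 1); 0, l ^ k] := by
  induction k with
  | zero => simp [Matrix.one_fin_two]
  | succ k ih =>
    rw [pow_succ, ih]
    have hk := hkl l k
    ext i j
    fin_cases i <;> fin_cases j <;>
      simp [Matrix.mul_apply, Fin.sum_univ_two, pow_succ] <;>
      push_cast <;> nlinarith [hk]

lemma comp0 (l α : ℝ) (N : ℕ) (c : ℕ → ℝ) (β : ℝ) :
    stmt9η l α N c β 0
      = ∑ k ∈ Finset.range N, c k * β ^ k * (l ^ k + α * k * l ^ (k - 1)) := by
  unfold stmt9η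
  rw [Finset.sum_apply]
  refine Finset.sum_congr rfl fun k _ => ?_
  rw [jpow]
  simp [Matrix.mulVec, dotProduct, Fin.sum_univ_two]
  ring

lemma comp1 (l α : ℝ) (N : ℕ) (c : ℕ → ℝ) (β : ℝ) :
    stmt9η l α N c β 1
      = ∑ k ∈ Finset.range N, c k * β ^ k * (α * l ^ k) := by
  unfold stmt9η
  rw [Finset.sum_apply]
  refine Finset.sum_congr rfl fun k _ => ?_
  rw [jpow]
  simp [Matrix.mulVec, dotProduct, Fin.sum_univ_two]
  ring

theorem stmt9 (l α β₁ β₂ : ℝ) (hl : l ≠ 0) (hα : α ≠ 0) (h1 : 0 < β₁) (h2 : β₁ < β₂) :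
    (∀ (N : ℕ) (c : ℕ → ℝ) (β : ℝ),
      stmt9η l α N c β 0 = stmt9η l α N c β 1 / α +
        deriv (fun x : ℝ => α * ∑ k ∈ Finset.range N, c k * β ^ k * x ^ k) l) ∧
    ¬ (∀ ξ : ℝ → Fin 2 → ℝ, ContinuousOn ξ (Set.Icc β₁ β₂) → ∀ ε > 0,
        ∃ (N : ℕ) (c : ℕ → ℝ), ∀ β ∈ Set.Icc β₁ β₂,
          ‖ξ β - stmt9η l α N c β‖ < ε) := by
  constructor
  · -- Part 1
    intro N c β
    have hder : HasDerivAt (fun x : ℝ => α * ∑ k ∈ Finset.range N, c k * β ^ k * x ^ k)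
        (α * ∑ k ∈ Finset.range N, c k * β ^ k * ((k : ℝ) * l ^ (k - 1))) l := by
      apply HasDerivAt.const_mul
      apply HasDerivAt.fun_sum
      intro k _
      simpa [mul_assoc] using (hasDerivAt_pow k l).const_mul (c k * β ^ k)
    rw [hder.deriv, comp0, comp1, Finset.sum_div, Finset.mul_sum,
      ← Finset.sum_add_distrib]
    refine Finset.sum_congr rfl fun k _ => ?_
    field_simp
  · -- Part 2
    intro hdense
    set D : ℝ := β₂ - β₁ with hD
    have hD0 : 0 < D := by simp [hD]; linarith
    set K : ℝ := D * (1 + |(1 - α / l) / α|) + (β₂ + β₁) / |l| with hK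
    have hl' : (0:ℝ) < |l| := abs_pos.2 hl
    have hK0 : 0 < K := by
      rw [hK]
      have h5 : 0 < (β₂ + β₁) / |l| := div_pos (by linarith) hl'
      nlinarith [abs_nonneg ((1 - α / l) / α)]
    set ε : ℝ := D / (K + 1) with hε
    have hε0 : 0 < ε := div_pos hD0 (by linarith)
    obtain ⟨N, c, hc⟩ := hdense (fun _ => ![1, 0]) continuousOn_const ε hε0
    set η := stmt9η l α N c with hη
    -- pointwise bounds
    have hb : ∀ β ∈ Set.Icc β₁ β₂, |1 - η β 0| ≤ ε ∧ |η β 1| ≤ ε := by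
      intro β hβ
      have h := (hc β hβ).le
      constructor
      · have := norm_le_pi_norm ((fun _ : ℝ => ![(1:ℝ), 0]) β - η β) 0
        simp at this
        calc |1 - η β 0| ≤ ‖(fun _ : ℝ => ![(1:ℝ), 0]) β - η β‖ := by
              simpa [Pi.sub_apply] using this
          _ ≤ ε := h
      · have := norm_le_pi_norm ((fun _ : ℝ => ![(1:ℝ), 0]) β - η β) 1
        calc |η β 1| = ‖((fun _ : ℝ => ![(1:ℝ), 0]) β - η β) 1‖ := by
              simp [Pi.sub_apply]
          _ ≤ ‖(fun _ : ℝ => ![(1:ℝ), 0]) β - η β‖ := norm_le_pi_norm _ 1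
          _ ≤ ε := h
    -- continuity of components
    have hcont0 : Continuous fun β => η β 0 := by
      simp only [hη, comp0]
      exact continuous_finset_sum _ fun k _ => (continuous_const.mul (continuous_pow k)).mul continuous_const
    have hcont1 : Continuous fun β => η β 1 := by
      simp only [hη, comp1]
      exact continuous_finset_sum _ fun k _ => (continuous_const.mul (continuous_pow k)).mul continuous_const
    -- integrals
    have hI0 : ∫ β in β₁..β₂, η β 0
        = ∑ k ∈ Finset.range N,
            (c k * (l ^ k + α * k * l ^ (k - 1))) * ((β₂ ^ (k+1) - β₁ ^ (k+1)) / (k+1)) := by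
      simp only [hη, comp0]
      rw [intervalIntegral.integral_finset_sum
        (fun k _ => (Continuous.intervalIntegrable (by fun_prop : Continuous fun β : ℝ => c k * β ^ k * (l ^ k + α * k * l ^ (k - 1))) _ _))]
      refine Finset.sum_congr rfl fun k _ => ?_
      have : (fun β : ℝ => c k * β ^ k * (l ^ k + α * k * l ^ (k - 1)))
          = fun β : ℝ => (c k * (l ^ k + α * k * l ^ (k - 1))) * β ^ k := by
        funext β; ring
      rw [this, intervalIntegral.integral_const_mul, integral_pow]
    have hI1 : ∫ β in β₁..β₂, η β 1
        = ∑ k ∈ Finset.range N,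
            (c k * (α * l ^ k)) * ((β₂ ^ (k+1) - β₁ ^ (k+1)) / (k+1)) := by
      simp only [hη, comp1]
      rw [intervalIntegral.integral_finset_sum
        (fun k _ => (Continuous.intervalIntegrable (by fun_prop : Continuous fun β : ℝ => c k * β ^ k * (α * l ^ k)) _ _))]
      refine Finset.sum_congr rfl fun k _ => ?_
      have : (fun β : ℝ => c k * β ^ k * (α * l ^ k))
          = fun β : ℝ => (c k * (α * l ^ k)) * β ^ k := by
        funext β; ring
      rw [this, intervalIntegral.integral_const_mul, integral_pow]
    -- key algebraic identity
    have hkey : (∫ β in β₁..β₂, η β 0)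
        = (1 - α / l) / α * (∫ β in β₁..β₂, η β 1)
          + (1 / l) * (β₂ * η β₂ 1 - β₁ * η β₁ 1) := by
      rw [hI0, hI1, hη, comp1 l α N c β₂, comp1 l α N c β₁,
        Finset.mul_sum, Finset.mul_sum, Finset.mul_sum, ← Finset.sum_sub_distrib,
        Finset.mul_sum, ← Finset.sum_add_distrib]
      refine Finset.sum_congr rfl fun k _ => ?_
      have hk := hkl l k
      have hk1 : ((k : ℝ) + 1) ≠ 0 := by positivity
      have hsub : l ^ k + α * (k : ℝ) * l ^ (k - 1) = l ^ k * (l + α * k) / l := by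
        field_simp
        linear_combination α * hk
      rw [hsub]
      field_simp
      ring
    -- bounds
    have hIb0 : |D - ∫ β in β₁..β₂, η β 0| ≤ ε * D := by
      have heq : D - ∫ β in β₁..β₂, η β 0 = ∫ β in β₁..β₂, (1 - η β 0) := by
        rw [intervalIntegral.integral_sub intervalIntegrable_const
          (hcont0.intervalIntegrable _ _)]
        simp [hD]
      rw [heq, ← Real.norm_eq_abs]
      have := intervalIntegral.norm_integral_le_of_norm_le_const
        (C := ε) (f := fun β => 1 - η β 0) (a := β₁) (b := β₂) ?_
      · calc ‖∫ β in β₁..β₂, (1 - η β 0)‖ ≤ ε * |β₂ - β₁| := this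
          _ = ε * D := by rw [abs_of_pos hD0]
      · intro x hx
        rw [Set.uIoc_of_le h2.le] at hx
        exact (hb x ⟨hx.1.le, hx.2⟩).1
    have hIb1 : |∫ β in β₁..β₂, η β 1| ≤ ε * D := by
      rw [← Real.norm_eq_abs]
      have := intervalIntegral.norm_integral_le_of_norm_le_const
        (C := ε) (f := fun β => η β 1) (a := β₁) (b := β₂) ?_
      · calc ‖∫ β in β₁..β₂, η β 1‖ ≤ ε * |β₂ - β₁| := this
          _ = ε * D := by rw [abs_of_pos hD0]
      · intro x hx
        rw [Set.uIoc_of_le h2.le] at hx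
        exact (hb x ⟨hx.1.le, hx.2⟩).2
    have he2 : |η β₂ 1| ≤ ε := (hb β₂ ⟨by linarith, le_refl _⟩).2
    have he1 : |η β₁ 1| ≤ ε := (hb β₁ ⟨le_refl _, h2.le⟩).2
    clear_value D K ε η
    -- final contradiction
    have h3 : |(1 - α / l) / α * (∫ β in β₁..β₂, η β 1)|
        ≤ |(1 - α / l) / α| * (ε * D) := by
      rw [abs_mul]
      exact mul_le_mul_of_nonneg_left hIb1 (abs_nonneg _)
    have h4 : |(1 / l) * (β₂ * η β₂ 1 - β₁ * η β₁ 1)| ≤ (β₂ + β₁) / |l| * ε := by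
      rw [abs_mul, abs_div, abs_one]
      have hball : |β₂ * η β₂ 1 - β₁ * η β₁ 1| ≤ β₂ * ε + β₁ * ε := by
        calc |β₂ * η β₂ 1 - β₁ * η β₁ 1| ≤ |β₂ * η β₂ 1| + |β₁ * η β₁ 1| :=
              abs_sub _ _
          _ = β₂ * |η β₂ 1| + β₁ * |η β₁ 1| := by
              rw [abs_mul, abs_mul, abs_of_pos (h1.trans h2), abs_of_pos h1]
          _ ≤ β₂ * ε + β₁ * ε := by
              have hb2 : (0:ℝ) < β₂ := h1.trans h2
              nlinarith
      calc (1 / |l|) * |β₂ * η β₂ 1 - β₁ * η β₁ 1| ≤ (1 / |l|) * (β₂ * ε + β₁ * ε) :=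
            mul_le_mul_of_nonneg_left hball (by positivity)
        _ = (β₂ + β₁) / |l| * ε := by ring
    have hI0abs : |∫ β in β₁..β₂, η β 0|
        ≤ |(1 - α / l) / α| * (ε * D) + (β₂ + β₁) / |l| * ε := by
      rw [hkey]
      calc |(1 - α / l) / α * (∫ β in β₁..β₂, η β 1)
            + (1 / l) * (β₂ * η β₂ 1 - β₁ * η β₁ 1)|
          ≤ |(1 - α / l) / α * (∫ β in β₁..β₂, η β 1)|
            + |(1 / l) * (β₂ * η β₂ 1 - β₁ * η β₁ 1)| := abs_add_le _ _
        _ ≤ |(1 - α / l) / α| * (ε * D) + (β₂ + β₁) / |l| * ε := add_le_add h3 h4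
    have hDle : D ≤ ε * D + (|(1 - α / l) / α| * (ε * D) + (β₂ + β₁) / |l| * ε) := by
      have h6 := abs_sub_abs_le_abs_sub D (∫ β in β₁..β₂, η β 0)
      rw [abs_of_pos hD0] at h6
      linarith [hIb0, hI0abs]
    have hEq : ε * D + (|(1 - α / l) / α| * (ε * D) + (β₂ + β₁) / |l| * ε) = ε * K := by
      rw [hK]; ring
    have hlt : ε * K < D := by
      rw [hε, div_mul_eq_mul_div, div_lt_iff₀ (by linarith : (0:ℝ) < K + 1)]
      nlinarith
    linarith
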